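/- arXiv:1909.04811 — 2 statements merged into one kernel-verified Lean document; each statement's English description precedes it below -/
import Mathlib

section
/- Let B₁, …, B_J be independent Bernoulli random variables with P(Bᵢ = 1) ≥ 1/2 for each i. Then E[(J+1)/(1 + B₁ + ⋯ + B_J)] ≤ 2. -/
open MeasureTheory ProbabilityTheory

/-- Integral of a finite product of independent nonnegative bounded random variables. -/
lemma aux_integral_prod {Ω : Type*} [MeasurableSpace Ω] (μ : Measure Ω) [IsProbabilityMeasure μ]
    {J : ℕ} (g : Fin J → Ω → ℝ)
    (hind : iIndepFun g μ)
    (hm : ∀ i, Measurable (g i)) (hnn : ∀ i ω, 0 ≤ g i ω) (s : Finset (Fin J)) :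
    ∫ ω, ∏ i ∈ s, g i ω ∂μ = ∏ i ∈ s, ∫ ω, g i ω ∂μ := by
  classical
  induction s using Finset.induction_on with
  | empty => simp
  | insert i s hi ih =>
    have hfun : (∏ j ∈ s, g j) = fun ω => ∏ j ∈ s, g j ω := by
      ext ω; simp
    have hprodmeas : Measurable (∏ j ∈ s, g j) := by
      rw [hfun]; exact Finset.measurable_prod s (fun j _ => hm j)
    have hip : IndepFun (∏ j ∈ s, g j) (g i) μ :=
      hind.indepFun_finsetProd_of_notMem hm hi
    have hnnprod : (0 : Ω → ℝ) ≤ ∏ j ∈ s, g j := fun ω => by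
      rw [hfun]; exact Finset.prod_nonneg (fun j _ => hnn j ω)
    have key := hip.integral_mul_eq_mul_integral
      hprodmeas.aestronglyMeasurable (hm i).aestronglyMeasurable
    have e1 : ∫ ω, ∏ j ∈ insert i s, g j ω ∂μ = integral μ ((∏ j ∈ s, g j) * g i) := by
      congr 1; ext ω
      rw [Finset.prod_insert hi, Pi.mul_apply, hfun]
      ring
    have e2 : integral μ (∏ j ∈ s, g j) = ∫ ω, ∏ j ∈ s, g j ω ∂μ := by
      rw [hfun]
    rw [e1, key, e2, ih, Finset.prod_insert hi, mul_comm]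

/-- The beta-type integral used in the proof. -/
lemma aux_ioc_integral (J : ℕ) :
    ∫ t in Set.Ioc (0:ℝ) 1, ((1 + t)/2) ^ J = (2 - (1/2) ^ J) / ((J:ℝ) + 1) := by
  rw [← intervalIntegral.integral_of_le zero_le_one]
  have h : ∀ t : ℝ, ((1 + t)/2) ^ J = (1/2)^J * (1 + t) ^ J := by
    intro t; rw [div_pow, one_div_pow]; ring
  simp_rw [h]
  rw [intervalIntegral.integral_const_mul, intervalIntegral.integral_comp_add_left
    (fun x => x ^ J) 1, integral_pow]
  norm_num
  have h2 : (1/2:ℝ)^J * (2:ℝ)^(J+1) = 2 := by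
    rw [pow_succ, ← mul_assoc, ← mul_pow]; norm_num
  rw [mul_div_assoc', mul_sub, h2, mul_one]

set_option maxHeartbeats 2000000 in
theorem barber_candes_lemma
    {Ω : Type*} [MeasurableSpace Ω] (μ : Measure Ω) [IsProbabilityMeasure μ]
    (J : ℕ) (B : Fin J → Ω → ℕ)
    (hmeas : ∀ i, Measurable (B i))
    (hval : ∀ i ω, B i ω ≤ 1)
    (hindep : iIndepFun B μ)
    (hhalf : ∀ i, (1:ℝ)/2 ≤ (μ {ω | B i ω = 1}).toReal) :
    ∫ ω, ((J:ℝ) + 1) / (1 + ∑ i, (B i ω : ℝ)) ∂μ ≤ 2 := by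
  classical
  set ν : Measure ℝ := volume.restrict (Set.Ioc (0:ℝ) 1) with hν
  haveI : IsProbabilityMeasure ν := by
    constructor
    rw [hν, Measure.restrict_apply MeasurableSet.univ, Set.univ_inter, Real.volume_Ioc]
    norm_num
  -- the integrand family
  set F : Ω → ℝ → ℝ := fun ω t => ∏ i, (1 - (1 - t) * (B i ω : ℝ)) with hF
  -- pointwise identity : F ω t = t ^ (∑ B i ω)
  have hFpow : ∀ ω t, F ω t = t ^ (∑ i, B i ω) := by
    intro ω t
    rw [hF]
    simp only
    rw [← Finset.prod_pow_eq_pow_sum]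
    apply Finset.prod_congr rfl
    intro i _
    rcases Nat.le_one_iff_eq_zero_or_eq_one.mp (hval i ω) with h | h <;> simp [h]
  -- measurability of the uncurried F
  have hFmeas : Measurable (Function.uncurry F) := by
    apply Finset.measurable_prod
    intro i _
    exact (measurable_const.sub ((measurable_const.sub measurable_snd).mul
      ((measurable_from_top.comp (hmeas i)).comp measurable_fst)))
  -- bound : for t ∈ Ioc 0 1, 0 ≤ factors ≤ 1
  have hfac_mem : ∀ i ω t, t ∈ Set.Ioc (0:ℝ) 1 →
      (1 - (1 - t) * (B i ω : ℝ)) ∈ Set.Icc (0:ℝ) 1 := by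
    intro i ω t ht
    rcases Nat.le_one_iff_eq_zero_or_eq_one.mp (hval i ω) with h | h <;>
      simp [h] <;> constructor <;> nlinarith [ht.1, ht.2]
  have hFbound : ∀ ω t, t ∈ Set.Ioc (0:ℝ) 1 → ‖F ω t‖ ≤ 1 := by
    intro ω t ht
    rw [Real.norm_eq_abs, abs_of_nonneg (Finset.prod_nonneg fun i _ => (hfac_mem i ω t ht).1)]
    calc ∏ i, (1 - (1 - t) * (B i ω : ℝ)) ≤ ∏ i : Fin J, 1 :=
          Finset.prod_le_prod (fun i _ => (hfac_mem i ω t ht).1)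
            (fun i _ => (hfac_mem i ω t ht).2)
      _ = 1 := by simp
  -- a.e. z.2 ∈ Ioc 0 1 under the product measure
  have hae : ∀ᵐ z ∂(μ.prod ν), z.2 ∈ Set.Ioc (0:ℝ) 1 := by
    have hs : MeasurableSet (Set.Ioc (0:ℝ) 1) := measurableSet_Ioc
    rw [ae_iff]
    have : {z : Ω × ℝ | ¬ z.2 ∈ Set.Ioc (0:ℝ) 1} = Prod.snd ⁻¹' (Set.Ioc (0:ℝ) 1)ᶜ := rfl
    rw [this, ← Measure.map_apply measurable_snd hs.compl, Measure.map_snd_prod]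
    simp [hν, Measure.restrict_apply hs.compl]
  -- integrability of uncurried F
  have hFint : Integrable (Function.uncurry F) (μ.prod ν) := by
    apply (integrable_const (1:ℝ)).mono' hFmeas.aestronglyMeasurable
    filter_upwards [hae] with z hz
    exact hFbound z.1 z.2 hz
  -- expectation of each B i
  set p : Fin J → ℝ := fun i => (μ {ω | B i ω = 1}).toReal with hp
  have hBind : ∀ i, (fun ω => (B i ω : ℝ)) =
      Set.indicator {ω | B i ω = 1} (fun _ => (1:ℝ)) := by
    intro i
    ext ω
    rcases Nat.le_one_iff_eq_zero_or_eq_one.mp (hval i ω) with h | h <;>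
      simp [Set.indicator_apply, h]
  have hsetmeas : ∀ i, MeasurableSet {ω | B i ω = 1} := by
    intro i
    exact (hmeas i) (measurableSet_singleton 1)
  have hEB : ∀ i, ∫ ω, (B i ω : ℝ) ∂μ = p i := by
    intro i
    rw [hBind i, integral_indicator_const (1:ℝ) (hsetmeas i)]
    simp [hp, Measure.real]
  have hBmeasR : ∀ i, Measurable (fun ω => (B i ω : ℝ)) := by
    intro i
    exact measurable_from_top.comp (hmeas i)
  have hBint : ∀ i, Integrable (fun ω => (B i ω : ℝ)) μ := by
    intro i
    apply (integrable_const (1:ℝ)).mono' (hBmeasR i).aestronglyMeasurable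
    apply ae_of_all
    intro ω
    rw [Real.norm_eq_abs, Nat.abs_cast]
    exact_mod_cast hval i ω
  have hp1 : ∀ i, p i ≤ 1 := fun i => ENNReal.toReal_le_of_le_ofReal zero_le_one
      (by simpa using MeasureTheory.prob_le_one (μ := μ) (s := {ω | B i ω = 1}))
  -- inner integral over Ω for fixed t
  have hinner : ∀ t, t ∈ Set.Ioc (0:ℝ) 1 →
      ∫ ω, F ω t ∂μ = ∏ i, (1 - (1 - t) * p i) := by
    intro t ht
    have hgind : iIndepFun
        (fun i ω => 1 - (1 - t) * (B i ω : ℝ)) μ := by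
      have := hindep.comp (fun i (b : ℕ) => 1 - (1 - t) * (b : ℝ))
        (fun i => measurable_const.sub (measurable_const.mul measurable_from_top))
      exact this
    rw [hF]
    simp only
    rw [aux_integral_prod μ _ hgind
      (fun i => measurable_const.sub (measurable_const.mul (hBmeasR i)))
      (fun i ω => (hfac_mem i ω t ht).1) Finset.univ]
    apply Finset.prod_congr rfl
    intro i _
    rw [integral_sub (integrable_const 1) ((hBint i).const_mul _),
      integral_const, integral_const_mul, hEB i]
    simp
  -- bound on the product
  have hprodbound : ∀ t, t ∈ Set.Ioc (0:ℝ) 1 →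
      ∏ i : Fin J, (1 - (1 - t) * p i) ≤ ((1 + t)/2) ^ J := by
    intro t ht
    have : ((1 + t)/2) ^ J = ∏ _i : Fin J, ((1 + t)/2) := by
      simp [Finset.prod_const, div_pow]
    rw [this]
    apply Finset.prod_le_prod
    · intro i _
      nlinarith [hp1 i, ht.1, ht.2, hhalf i]
    · intro i _
      nlinarith [hhalf i, ht.1, ht.2]
  -- pointwise identity for the main integrand
  have hpoint : ∀ ω, ((J:ℝ) + 1) / (1 + ∑ i, (B i ω : ℝ)) =
      ((J:ℝ) + 1) * ∫ t, F ω t ∂ν := by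
    intro ω
    have h1 : ∫ t, F ω t ∂ν = ∫ t in (0:ℝ)..1, F ω t := by
      rw [intervalIntegral.integral_of_le zero_le_one, hν]
    rw [h1]
    have h2 : ∫ t in (0:ℝ)..1, F ω t = ∫ t in (0:ℝ)..1, t ^ (∑ i, B i ω) := by
      apply intervalIntegral.integral_congr
      intro t _
      exact hFpow ω t
    rw [h2, integral_pow]
    have hcast : (1:ℝ) + ∑ i, (B i ω : ℝ) = ((∑ i, B i ω : ℕ) : ℝ) + 1 := by
      push_cast; ring
    rw [hcast]
    have hpos : (0:ℝ) < ((∑ i, B i ω : ℕ) : ℝ) + 1 := by positivity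
    field_simp
    simp
  -- put it together
  have hswap : ∫ ω, ∫ t, F ω t ∂ν ∂μ = ∫ t, ∫ ω, F ω t ∂μ ∂ν :=
    integral_integral_swap hFint
  -- bound the outer integral over t
  have houter : ∫ t, ∫ ω, F ω t ∂μ ∂ν ≤ ∫ t, ((1 + t)/2) ^ J ∂ν := by
    apply integral_mono_ae
    · exact hFint.integral_prod_right
    · have hcont : Continuous (fun t : ℝ => ((1 + t)/2) ^ J) := by continuity
      exact hcont.integrableOn_Ioc
    · have hae2 : ∀ᵐ t ∂ν, t ∈ Set.Ioc (0:ℝ) 1 :=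
        ae_restrict_mem measurableSet_Ioc
      filter_upwards [hae2] with t ht
      rw [hinner t ht]
      exact hprodbound t ht
  -- compute the last integral
  have hcomp : ∫ t, ((1 + t)/2) ^ J ∂ν = (2 - (1/2) ^ J) / ((J:ℝ) + 1) := by
    rw [hν]; exact aux_ioc_integral J
  -- final computation
  calc ∫ ω, ((J:ℝ) + 1) / (1 + ∑ i, (B i ω : ℝ)) ∂μ
      = ∫ ω, ((J:ℝ) + 1) * ∫ t, F ω t ∂ν ∂μ := by
        apply integral_congr_ae; apply ae_of_all; intro ω; exact hpoint ω
    _ = ((J:ℝ) + 1) * ∫ ω, ∫ t, F ω t ∂ν ∂μ := integral_const_mul _ _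
    _ = ((J:ℝ) + 1) * ∫ t, ∫ ω, F ω t ∂μ ∂ν := by rw [hswap]
    _ ≤ ((J:ℝ) + 1) * ((2 - (1/2) ^ J) / ((J:ℝ) + 1)) := by
        apply mul_le_mul_of_nonneg_left _ (by positivity)
        rw [← hcomp]; exact houter
    _ = 2 - (1/2) ^ J := by
        have hJpos : (0:ℝ) < (J:ℝ) + 1 := by positivity
        field_simp
    _ ≤ 2 := by
        have : (0:ℝ) < (1/2) ^ J := by positivity
        linarith
end

section
/- Let B₁, …, B_J be independent Bernoulli(1/2) random variables. Then E[(J+1)/(1 + B₁ + ⋯ + B_J)] = 2(1 - 2^{-(J+1)}) ≤ 2. -/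
open MeasureTheory ProbabilityTheory

theorem barber_candes_exact
    {Ω : Type*} [MeasurableSpace Ω] (μ : Measure Ω) [IsProbabilityMeasure μ]
    (J : ℕ) (B : Fin J → Ω → ℕ)
    (hmeas : ∀ i, Measurable (B i))
    (hval : ∀ i ω, B i ω ≤ 1)
    (hindep : iIndepFun B μ)
    (hhalf : ∀ i, (μ {ω | B i ω = 1}).toReal = 1/2) :
    (∫ ω, ((J:ℝ) + 1) / (1 + ∑ i, (B i ω : ℝ)) ∂μ
        = 2 * (1 - (2:ℝ) ^ (-((J:ℝ) + 1)))) ∧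
    ∫ ω, ((J:ℝ) + 1) / (1 + ∑ i, (B i ω : ℝ)) ∂μ ≤ 2 := by
  classical
  -- measure of {B i = 1} and {B i = 0}
  have hone : ∀ i, μ (B i ⁻¹' {1}) = 1/2 := by
    intro i
    have h := hhalf i
    have hne : μ (B i ⁻¹' {1}) ≠ ⊤ := measure_ne_top _ _
    have : (μ (B i ⁻¹' {1})).toReal = 1/2 := h
    rw [← ENNReal.ofReal_toReal hne, this]
    rw [ENNReal.ofReal_div_of_pos (by norm_num)]
    norm_num
  have hzero : ∀ i, μ (B i ⁻¹' {0}) = 1/2 := by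
    intro i
    have hc : B i ⁻¹' {0} = (B i ⁻¹' {1})ᶜ := by
      ext ω
      have := hval i ω
      simp only [Set.mem_preimage, Set.mem_singleton_iff, Set.mem_compl_iff]
      omega
    rw [hc, measure_compl ((hmeas i) (measurableSet_singleton 1)) (measure_ne_top _ _),
      measure_univ, hone i, one_div]
    exact ENNReal.one_sub_inv_two
  -- the atoms of the partition
  set v : Finset (Fin J) → Fin J → ℕ := fun s i => if i ∈ s then 1 else 0 with hv
  set A : Finset (Fin J) → Set Ω := fun s => ⋂ i, B i ⁻¹' {v s i} with hA
  have hAmeas : ∀ s, MeasurableSet (A s) := fun s =>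
    MeasurableSet.iInter fun i => (hmeas i) (measurableSet_singleton _)
  have hAmu : ∀ s, μ (A s) = (1/2 : ENNReal) ^ J := by
    intro s
    rw [hA]
    rw [hindep.meas_iInter (fun i => ⟨{v s i}, measurableSet_singleton _, rfl⟩)]
    have : ∀ i : Fin J, μ (B i ⁻¹' {v s i}) = 1/2 := by
      intro i
      by_cases h : i ∈ s <;> simp [hv, h, hone i, hzero i]
    rw [Finset.prod_congr rfl (fun i _ => this i), Finset.prod_const]
    simp
  set c : Finset (Fin J) → ℝ := fun s => ((J:ℝ) + 1) / (1 + (s.card : ℝ)) with hc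
  -- pointwise decomposition
  have hpt : ∀ ω, ((J:ℝ) + 1) / (1 + ∑ i, (B i ω : ℝ))
      = ∑ s : Finset (Fin J), (A s).indicator (fun _ => c s) ω := by
    intro ω
    set t : Finset (Fin J) := Finset.univ.filter (fun i => B i ω = 1) with ht
    have hBt : ∀ i, B i ω = v t i := by
      intro i
      have := hval i ω
      by_cases h : B i ω = 1 <;> simp [hv, ht, h] <;> omega
    have hmem : ω ∈ A t := by
      rw [hA]; exact Set.mem_iInter.mpr fun i => by simp [hBt i]
    have hnmem : ∀ s, s ≠ t → ω ∉ A s := by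
      intro s hs hmems
      apply hs
      ext i
      have hi : B i ω = v s i := by
        have := Set.mem_iInter.mp hmems i; simpa using this
      have hvv : v s i = v t i := by rw [← hi, hBt i]
      by_cases h1 : i ∈ s <;> by_cases h3 : i ∈ t <;>
        simp [hv, h1, h3] at hvv ⊢
    have hsum : ∑ i, (B i ω : ℝ) = (t.card : ℝ) := by
      have : ∀ i, (B i ω : ℝ) = if i ∈ t then (1:ℝ) else 0 := by
        intro i
        rw [hBt i]
        by_cases h : i ∈ t <;> simp [hv, h]
      rw [Finset.sum_congr rfl (fun i _ => this i)]
      simp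
    rw [Finset.sum_eq_single t
      (fun s _ hs => Set.indicator_of_notMem (hnmem s hs) _)
      (fun h => absurd (Finset.mem_univ t) h)]
    rw [Set.indicator_of_mem hmem, hc, hsum]
  -- compute the integral
  have hint : ∫ ω, ((J:ℝ) + 1) / (1 + ∑ i, (B i ω : ℝ)) ∂μ
      = ∑ s : Finset (Fin J), (1/2 : ℝ) ^ J * c s := by
    rw [integral_congr_ae (Filter.Eventually.of_forall hpt)]
    rw [integral_finset_sum _ (fun s _ => (integrable_const (c s)).indicator (hAmeas s))]
    refine Finset.sum_congr rfl fun s _ => ?_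
    rw [integral_indicator_const _ (hAmeas s), measureReal_def, hAmu s]
    simp [ENNReal.toReal_pow, smul_eq_mul]
  -- combinatorial identity
  have hcomb : ∑ s : Finset (Fin J), c s = (2:ℝ) ^ (J + 1) - 1 := by
    have h1 : ∑ s : Finset (Fin J), c s
        = ∑ m ∈ Finset.range (J + 1), (J.choose m) • (((J:ℝ) + 1) / (1 + (m:ℝ))) := by
      rw [← Finset.powerset_univ, Finset.sum_powerset_apply_card
        (fun m => ((J:ℝ) + 1) / (1 + (m:ℝ)))]
      simp
    rw [h1]
    have h2 : ∀ m ∈ Finset.range (J + 1),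
        (J.choose m) • (((J:ℝ) + 1) / (1 + (m:ℝ))) = (((J+1).choose (m+1) : ℕ) : ℝ) := by
      intro m hm
      have key : (J + 1) * J.choose m = (J+1).choose (m+1) * (m+1) :=
        Nat.add_one_mul_choose_eq J m
      have keyR : ((J:ℝ) + 1) * (J.choose m : ℝ) = ((J+1).choose (m+1) : ℝ) * ((m:ℝ) + 1) := by
        exact_mod_cast congrArg (fun n : ℕ => (n : ℝ)) key
      rw [nsmul_eq_mul]
      have hm1 : (1 : ℝ) + (m:ℝ) ≠ 0 := by positivity
      field_simp
      linarith [keyR]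
    rw [Finset.sum_congr rfl h2]
    have h3 : ∑ m ∈ Finset.range (J + 1), (J+1).choose (m+1) = 2 ^ (J+1) - 1 := by
      have h4 := Finset.sum_range_succ' (fun m => (J+1).choose m) (J+1)
      have h5 := Nat.sum_range_choose (J+1)
      simp only [Nat.choose_zero_right] at h4
      omega
    have h6 : (1:ℕ) ≤ 2 ^ (J+1) := Nat.one_le_two_pow
    rw [← Nat.cast_sum, h3, Nat.cast_sub h6]
    push_cast
    ring
  have hrpow : (2:ℝ) ^ (-((J:ℝ) + 1)) = ((2:ℝ) ^ (J + 1))⁻¹ := by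
    have : -((J:ℝ) + 1) = -(((J+1 : ℕ)):ℝ) := by push_cast; ring
    rw [this, Real.rpow_neg (by norm_num), Real.rpow_natCast]
  have hval2 : ∫ ω, ((J:ℝ) + 1) / (1 + ∑ i, (B i ω : ℝ)) ∂μ
      = 2 * (1 - (2:ℝ) ^ (-((J:ℝ) + 1))) := by
    rw [hint, ← Finset.mul_sum, hcomb, hrpow]
    have h2J : (2:ℝ) ^ J ≠ 0 := by positivity
    rw [one_div, inv_pow]
    field_simp
    ring
  refine ⟨hval2, ?_⟩
  rw [hval2]
  have : (0:ℝ) ≤ (2:ℝ) ^ (-((J:ℝ) + 1)) := Real.rpow_nonneg (by norm_num) _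
  nlinarith
end
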